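/- Let S be a Dedekind scheme with function field K and X_K a proper smooth connected curve of positive genus over K admitting a Néron model X_sm over S (the smooth locus of the minimal regular model). If Y is a proper smooth S-scheme and f_K : Y_K → X_K is a dominant K-morphism, then X_K has good reduction over S, i.e. admits a proper smooth model. -/

import Mathlib

open AlgebraicGeometry CategoryTheory CategoryTheory.Limits TopologicalSpace

universe u

namespace NeronPaper

/-- A morphism of schemes is smooth at a point `x` if there are affine opens as in
`AlgebraicGeometry.IsSmooth` around `x`. -/
def SmoothAt {X Y : Scheme.{u}} (f : X ⟶ Y) (x : X) : Prop :=
  ∃ (U : Y.affineOpens) (V : X.affineOpens) (_ : x ∈ V.1) (e : V.1 ≤ f ⁻¹ᵁ U.1),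
    RingHom.IsStandardSmooth (f.appLE U V e).hom

/-- The smooth locus of a morphism of schemes. -/
def smoothLocus {X Y : Scheme.{u}} (f : X ⟶ Y) : Set X := {x | SmoothAt f x}

lemma smoothLocus_isOpen {X Y : Scheme.{u}} (f : X ⟶ Y) : IsOpen (smoothLocus f) := by
  rw [isOpen_iff_forall_mem_open]
  rintro x ⟨U, V, hxV, e, hs⟩
  exact ⟨V.1, fun y hy => ⟨U, V, hy, e, hs⟩, V.1.2, hxV⟩

/-- A morphism of schemes is flat if all stalk maps are flat ring maps. -/
def SchemeFlat {X Y : Scheme.{u}} (f : X ⟶ Y) : Prop := ∀ x : X, (f.stalkMap x).hom.Flat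

/-- A (noetherian) local ring is regular if its maximal ideal is generated by
(Krull dimension) many elements. -/
def IsRegularLocalRingP (A : Type u) [CommRing A] [IsLocalRing A] : Prop :=
  IsNoetherianRing A ∧ ∃ s : Finset A,
    Ideal.span (s : Set A) = IsLocalRing.maximalIdeal A ∧ (s.card : WithBot ℕ∞) = ringKrullDim A

/-- A scheme is regular if all its stalks are regular local rings. -/
def IsRegularScheme (X : Scheme.{u}) : Prop :=
  ∀ x : X, IsRegularLocalRingP (X.presheaf.stalk x)

/-- A Dedekind scheme: noetherian, regular, connected (hence integral), of dimension 1. -/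
structure IsDedekindScheme (S : Scheme.{u}) : Prop where
  locallyNoetherian : IsLocallyNoetherian S
  compact : CompactSpace S
  integral : IsIntegral S
  regular : IsRegularScheme S
  dimOne : topologicalKrullDim S = 1

/-- `f : X ⟶ S` is a Néron lft-model (of its generic fiber, taken at the point `η` of `S`):
a smooth separated flat model, locally of finite type, such that every morphism from the
generic fiber of a smooth `S`-scheme `Y` to the generic fiber of `X`, over the generic point,
extends uniquely to an `S`-morphism `Y ⟶ X`. -/
def IsNeronLftModelAt {X S : Scheme.{u}} (f : X ⟶ S) (η : S) : Prop :=
  IsSmooth f ∧ IsSeparated f ∧ LocallyOfFiniteType f ∧ SchemeFlat f ∧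
  ∀ (Y : Scheme.{u}) (g : Y ⟶ S), IsSmooth g →
    ∀ φ : pullback g (S.fromSpecStalk η) ⟶ pullback f (S.fromSpecStalk η),
      φ ≫ pullback.snd f (S.fromSpecStalk η) = pullback.snd g (S.fromSpecStalk η) →
      ∃! h : Y ⟶ X, h ≫ f = g ∧
        pullback.fst g (S.fromSpecStalk η) ≫ h = φ ≫ pullback.fst f (S.fromSpecStalk η)


attribute [local instance] MvPolynomial.gradedAlgebra

/-- The projective line over a commutative ring. -/
noncomputable def P1 (R : Type u) [CommRing R] : Scheme.{u} :=
  Proj (MvPolynomial.homogeneousSubmodule (Fin 2) R)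

section Aux

/-- A flat ring homomorphism from a domain to a nontrivial ring is injective. -/
lemma injective_of_flat_of_domain {A B : Type u} [CommRing A] [IsDomain A] [CommRing B]
    [Nontrivial B] (φ : A →+* B) (hφ : φ.Flat) : Function.Injective φ := by
  letI : Algebra A B := φ.toAlgebra
  haveI : Module.Flat A B := hφ
  refine (injective_iff_map_eq_zero φ).mpr fun a ha => ?_
  by_contra hne
  have hL : Function.Injective (LinearMap.lsmul A A a) := fun u v huv =>
    mul_left_cancel₀ hne (by simpa [smul_eq_mul] using huv)
  have key := Module.Flat.lTensor_preserves_injective_linearMap (M := B) _ hL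
  have h1 : (LinearMap.lsmul A A a).lTensor B ((1 : B) ⊗ₜ[A] (1 : A)) = (1 : B) ⊗ₜ[A] a := by
    simp
  have h2 : (1 : B) ⊗ₜ[A] a = 0 := by
    have : (1 : B) ⊗ₜ[A] a = (a • (1 : B)) ⊗ₜ[A] (1 : A) := by
      rw [TensorProduct.smul_tmul, smul_eq_mul, mul_one]
    rw [this, Algebra.smul_def, RingHom.algebraMap_toAlgebra, mul_one, ha,
      TensorProduct.zero_tmul]
  have h3 : (1 : B) ⊗ₜ[A] (1 : A) = 0 := key (by rw [h1, h2, map_zero])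
  have h4 := congrArg (TensorProduct.rid A B) h3
  rw [map_zero, TensorProduct.rid_tmul, one_smul] at h4
  exact one_ne_zero h4

/-- A flat ring homomorphism from a domain to a nontrivial ring has a prime lying over `⊥`. -/
lemma exists_primeSpectrum_comap_eq_bot {A B : Type u} [CommRing A] [IsDomain A] [CommRing B]
    [Nontrivial B] (φ : A →+* B) (hφ : φ.Flat) :
    ∃ p : PrimeSpectrum B, PrimeSpectrum.comap φ p = ⟨⊥, Ideal.bot_prime⟩ := by
  have hinj : Function.Injective φ := injective_of_flat_of_domain φ hφ
  set M : Submonoid B := Submonoid.map φ (nonZeroDivisors A) with hM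
  haveI : Nontrivial (Localization M) := by
    refine nontrivial_of_ne 0 1 fun h => ?_
    obtain ⟨⟨m, hm⟩, hm0⟩ := (IsLocalization.map_eq_zero_iff M (Localization M) 1).mp
      (by rw [map_one]; exact h.symm)
    rw [mul_one] at hm0
    obtain ⟨a, ha, rfl⟩ := hm
    exact nonZeroDivisors.ne_zero ha (hinj (show φ a = φ 0 by simpa using hm0))
  obtain ⟨q, hq⟩ := Ideal.exists_maximal (Localization M)
  refine ⟨PrimeSpectrum.comap (algebraMap B (Localization M)) ⟨q, hq.isPrime⟩, ?_⟩
  refine PrimeSpectrum.ext ?_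
  refine (eq_bot_iff).mpr fun a ha => ?_
  rw [Ideal.mem_bot]
  by_contra hne
  have hmem : φ a ∈ M := ⟨a, mem_nonZeroDivisors_of_ne_zero hne, rfl⟩
  have hunit : IsUnit (algebraMap B (Localization M) (φ a)) :=
    IsLocalization.map_units (Localization M) (⟨φ a, hmem⟩ : M)
  have haq : algebraMap B (Localization M) (φ a) ∈ q := ha
  exact hq.ne_top (q.eq_top_of_isUnit_mem haq hunit)

/-- Stalks of integral schemes are domains. -/
lemma stalk_isDomain (X : Scheme.{u}) [IsIntegral X] (x : X) :
    IsDomain (X.presheaf.stalk x) :=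
  Function.Injective.isDomain (algebraMap (X.presheaf.stalk x) X.functionField)
    (IsLocalization.injective _ (le_refl (nonZeroDivisors _)))

end Aux

/-- let `X_sm` be the Néron model over a Dedekind scheme `S` of a proper
smooth connected curve `X_K` of positive genus (positivity of the genus encoded by: no
geometric fiber of the generic fiber is isomorphic to `ℙ¹`).  If a proper smooth
`S`-scheme `Y` admits a dominant `K`-morphism from its generic fiber to `X_K`, then
`X_K` has good reduction: it admits a proper smooth model over `S`. -/
theorem good_reduction_of_dominant_from_proper_smooth
    {S Xsm Y : Scheme.{u}} [IrreducibleSpace S] (hS : IsDedekindScheme S)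
    (f : Xsm ⟶ S) (hN : IsNeronLftModelAt f (genericPoint S)) (hft : QuasiCompact f)
    (hKproper : IsProper (pullback.snd f (S.fromSpecStalk (genericPoint S))))
    (hKconn : ConnectedSpace ↥(pullback f (S.fromSpecStalk (genericPoint S))))
    (hKdim : topologicalKrullDim ↥(pullback f (S.fromSpecStalk (genericPoint S))) = 1)
    (hgenus : ∀ (L : Type u) (_ : Field L) (_ : IsAlgClosed L)
      (φ : S.presheaf.stalk (genericPoint S) ⟶ CommRingCat.of L),
      IsEmpty ((pullback (pullback.snd f (S.fromSpecStalk (genericPoint S)))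
        (Spec.map φ)) ≅ P1 L))
    (g : Y ⟶ S) [IsProper g] [Smooth g]
    (φK : pullback g (S.fromSpecStalk (genericPoint S)) ⟶
          pullback f (S.fromSpecStalk (genericPoint S)))
    (hφ : φK ≫ pullback.snd f (S.fromSpecStalk (genericPoint S)) =
          pullback.snd g (S.fromSpecStalk (genericPoint S)))
    (hdom : DenseRange φK.base) :
    ∃ (Z : Scheme.{u}) (h : Z ⟶ S), IsProper h ∧ IsSmooth h ∧
      ∃ e : pullback h (S.fromSpecStalk (genericPoint S)) ≅
            pullback f (S.fromSpecStalk (genericPoint S)),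
        e.hom ≫ pullback.snd f (S.fromSpecStalk (genericPoint S)) =
          pullback.snd h (S.fromSpecStalk (genericPoint S)) := by
  classical
  obtain ⟨hsm, hsep, hlft, hflat, hmap⟩ := hN
  haveI := hsep; haveI := hlft; haveI := hft
  haveI : IsIntegral S := hS.integral
  obtain ⟨h, ⟨hhf, hhφ⟩, -⟩ := hmap Y g (inferInstance : Smooth g) φK hφ
  -- `h : Y ⟶ Xsm` is the Néron extension of `φK`.
  -- Step 1: `h` is universally closed (graph factorization).
  have hcomm : 𝟙 Y ≫ g = h ≫ f := by rw [Category.id_comp, hhf]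
  let Γ : Y ⟶ pullback g f := pullback.lift (𝟙 Y) h hcomm
  haveI : IsSeparated (pullback.fst g f) :=
    inferInstance
  haveI : IsClosedImmersion (Γ ≫ pullback.fst g f) := by
    rw [pullback.lift_fst]; infer_instance
  haveI : IsClosedImmersion Γ := IsClosedImmersion.of_comp Γ (pullback.fst g f)
  haveI : UniversallyClosed (pullback.snd g f) :=
    inferInstance
  have hΓ : Γ ≫ pullback.snd g f = h := pullback.lift_snd _ _ _
  haveI : UniversallyClosed h := hΓ ▸ inferInstance
  -- Step 2: the range of `h` is closed.
  have hFclosed : IsClosed (Set.range h.base) :=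
    Set.image_univ ▸ h.isClosedMap _ isClosed_univ
  -- Step 3: the range of `h` contains the generic fiber of `f` (density of `φK`).
  have hsub1 : Set.range (pullback.fst f (S.fromSpecStalk (genericPoint S))).base ⊆
      Set.range h.base := by
    have himg : (pullback.fst f (S.fromSpecStalk (genericPoint S))).base ''
        Set.range φK.base ⊆ Set.range h.base := by
      rintro x ⟨z, ⟨w, rfl⟩, rfl⟩
      refine ⟨(pullback.fst g (S.fromSpecStalk (genericPoint S))).base w, ?_⟩
      rw [← Scheme.Hom.comp_apply, hhφ, Scheme.Hom.comp_apply]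
    calc Set.range (pullback.fst f (S.fromSpecStalk (genericPoint S))).base
        = (pullback.fst f (S.fromSpecStalk (genericPoint S))).base ''
            closure (Set.range φK.base) := by
          rw [hdom.closure_range, Set.image_univ]
      _ ⊆ closure ((pullback.fst f (S.fromSpecStalk (genericPoint S))).base ''
            Set.range φK.base) :=
          image_closure_subset_closure_image (Scheme.Hom.continuous _)
      _ ⊆ closure (Set.range h.base) := closure_mono himg
      _ = Set.range h.base := hFclosed.closure_eq
  -- Step 4: `h` is surjective, using flatness of `f`.
  have hsurj : Function.Surjective h.base := by
    intro x
    haveI : IsDomain (S.presheaf.stalk (f.base x)) := stalk_isDomain S (f.base x)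
    obtain ⟨p, hp⟩ := exists_primeSpectrum_comap_eq_bot (f.stalkMap x).hom (hflat x)
    set x' := (Xsm.fromSpecStalk x).base p with hx'def
    have hx'spec : x' ⤳ x := by
      have : x' ∈ {y | y ⤳ x} := by
        rw [← Scheme.range_fromSpecStalk]; exact ⟨p, rfl⟩
      exact this
    -- the image of `x'` in `S` generalizes to the generic point
    have hfx' : f.base x' =
        (S.fromSpecStalk (f.base x)).base ((Spec.map (f.stalkMap x)).base p) := by
      show _ = (Spec.map (f.stalkMap x) ≫ S.fromSpecStalk (f.base x)).base p
      rw [Scheme.SpecMap_stalkMap_fromSpecStalk]; rfl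
    have hSpecp : (Spec.map (f.stalkMap x)).base p =
        (⟨⊥, Ideal.bot_prime⟩ : PrimeSpectrum (S.presheaf.stalk (f.base x))) := by
      exact hp
    have hηs : (genericPoint S : S) ⤳ f.base x := genericPoint_specializes _
    obtain ⟨q', hq'⟩ : (genericPoint S : S) ∈
        Set.range (S.fromSpecStalk (f.base x)).base := by
      rw [Scheme.range_fromSpecStalk]; exact hηs
    have hbotq' : (⟨⊥, Ideal.bot_prime⟩ :
        PrimeSpectrum (S.presheaf.stalk (f.base x))) ⤳ q' :=
      (PrimeSpectrum.le_iff_specializes _ _).mp bot_le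
    have hfx'η : f.base x' ⤳ (genericPoint S : S) := by
      rw [hfx', hSpecp, ← hq']
      exact hbotq'.map (Scheme.Hom.continuous _)
    have hx'mem : x' ∈ Set.range (pullback.fst f (S.fromSpecStalk (genericPoint S))).base := by
      rw [Scheme.Pullback.range_fst]
      show f.base x' ∈ Set.range (S.fromSpecStalk (genericPoint S)).base
      rw [Scheme.range_fromSpecStalk]
      exact hfx'η
    exact hFclosed.stableUnderSpecialization hx'spec (hsub1 hx'mem)
  -- Step 5: conclude that `f` is proper.
  haveI : Surjective h := ⟨hsurj⟩
  haveI : UniversallyClosed (h ≫ f) := by rw [hhf]; infer_instance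
  haveI : UniversallyClosed f := UniversallyClosed.of_comp_surjective h f
  haveI : IsSmooth f := hsm
  haveI : IsProper f := ⟨⟩
  exact ⟨Xsm, f, inferInstance, hsm, Iso.refl _, Category.id_comp _⟩

end NeronPaper
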